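/- Let (C, b, 1_C, T) be a standard oriented quantum coalgebra over a field k with C cocommutative. Then b(c, T(d)) = b(c, d) = b(T(c), d) for all c, d ∈ C. -/
import Mathlib


open TensorProduct

noncomputable section

variable {k : Type*} [Field k]

section CoalgebraDefs

variable {C : Type*} [AddCommGroup C] [Module k C]
variable {D : Type*} [AddCommGroup D] [Module k D]

/-- `b'` is a (two-sided convolution) inverse for the bilinear form `b`. -/
def IsInverseForm (ΔC : C →ₗ[k] C ⊗[k] C) (εC : C →ₗ[k] k)
    (ΔD : D →ₗ[k] D ⊗[k] D) (εD : D →ₗ[k] k)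
    (b b' : C →ₗ[k] D →ₗ[k] k) : Prop :=
  ∀ (c : C) (d : D) (n m : ℕ) (c1 c2 : Fin n → C) (d1 d2 : Fin m → D),
    ΔC c = ∑ i, c1 i ⊗ₜ[k] c2 i →
    ΔD d = ∑ j, d1 j ⊗ₜ[k] d2 j →
    (∑ i, ∑ j, b' (c1 i) (d1 j) * b (c2 i) (d2 j) = εC c * εD d) ∧
    (∑ i, ∑ j, b (c1 i) (d1 j) * b' (c2 i) (d2 j) = εC c * εD d)

/-- `T` is a coalgebra automorphism of `C` with respect to the set `𝒮` of bilinear forms. -/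
def IsCoalgAutoWrt (Δ : C →ₗ[k] C ⊗[k] C) (εm : C →ₗ[k] k)
    (𝒮 : Set (C →ₗ[k] C →ₗ[k] k)) (T : C →ₗ[k] C) : Prop :=
  Function.Bijective T ∧ (∀ c, εm (T c) = εm c) ∧
  ∀ β ∈ 𝒮, ∀ β' ∈ 𝒮, ∀ (c d e : C) (n m : ℕ)
    (c1 c2 : Fin n → C) (f1 f2 : Fin m → C),
    Δ c = ∑ i, c1 i ⊗ₜ[k] c2 i →
    Δ (T c) = ∑ j, f1 j ⊗ₜ[k] f2 j →
    (∑ i, β (T (c1 i)) d * β' (T (c2 i)) e = ∑ j, β (f1 j) d * β' (f2 j) e) ∧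
    (∑ i, β d (T (c1 i)) * β' e (T (c2 i)) = ∑ j, β d (f1 j) * β' e (f2 j))

/-- `T` is an ordinary coalgebra automorphism. -/
def IsCoalgAuto (Δ : C →ₗ[k] C ⊗[k] C) (εm : C →ₗ[k] k) (T : C →ₗ[k] C) : Prop :=
  Function.Bijective T ∧ (∀ c, εm (T c) = εm c) ∧
  Δ ∘ₗ T = (TensorProduct.map T T) ∘ₗ Δ

/-- Axiom (qc.1). -/
def QC1 (Δ : C →ₗ[k] C ⊗[k] C) (εm : C →ₗ[k] k)
    (b binv : C →ₗ[k] C →ₗ[k] k) (Td Tu : C →ₗ[k] C) : Prop :=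
  ∀ (c d : C) (n m : ℕ) (c1 c2 : Fin n → C) (d1 d2 : Fin m → C),
    Δ c = ∑ i, c1 i ⊗ₜ[k] c2 i →
    Δ d = ∑ j, d1 j ⊗ₜ[k] d2 j →
    (∑ i, ∑ j, b (c1 i) (Tu (d2 j)) * binv (Td (c2 i)) (d1 j) = εm c * εm d) ∧
    (∑ i, ∑ j, binv (Td (c1 i)) (d2 j) * b (c2 i) (Tu (d1 j)) = εm c * εm d)

/-- Axiom (qc.2). -/
def QC2 (b : C →ₗ[k] C →ₗ[k] k) (Td Tu : C →ₗ[k] C) : Prop :=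
  ∀ c d : C, b (Td c) (Td d) = b c d ∧ b (Tu c) (Tu d) = b c d

/-- Axiom (qc.3), the quantum coalgebra Yang–Baxter relation. -/
def QC3 (Δ : C →ₗ[k] C ⊗[k] C) (b : C →ₗ[k] C →ₗ[k] k) : Prop :=
  ∀ (c d e : C) (n m p : ℕ) (c1 c2 : Fin n → C) (d1 d2 : Fin m → C) (e1 e2 : Fin p → C),
    Δ c = ∑ i, c1 i ⊗ₜ[k] c2 i →
    Δ d = ∑ j, d1 j ⊗ₜ[k] d2 j →
    Δ e = ∑ l, e1 l ⊗ₜ[k] e2 l →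
    ∑ i, ∑ j, ∑ l, b (c1 i) (d1 j) * b (c2 i) (e1 l) * b (d2 j) (e2 l)
      = ∑ i, ∑ j, ∑ l, b (c2 i) (d2 j) * b (c1 i) (e2 l) * b (d1 j) (e1 l)

/-- Oriented quantum coalgebra, with comultiplication `Δ`, counit `εm`, bilinear form `b`
with inverse `binv`, and structure maps `Td`, `Tu`. -/
def IsOrientedQuantumCoalgebra (Δ : C →ₗ[k] C ⊗[k] C) (εm : C →ₗ[k] k)
    (b binv : C →ₗ[k] C →ₗ[k] k) (Td Tu : C →ₗ[k] C) : Prop :=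
  IsInverseForm Δ εm Δ εm b binv ∧
  IsCoalgAutoWrt Δ εm {b, binv} Td ∧
  IsCoalgAutoWrt Δ εm {b, binv} Tu ∧
  Td ∘ₗ Tu = Tu ∘ₗ Td ∧
  QC1 Δ εm b binv Td Tu ∧ QC2 b Td Tu ∧ QC3 Δ b

/-- Strict oriented quantum coalgebra. -/
def IsStrictOrientedQuantumCoalgebra (Δ : C →ₗ[k] C ⊗[k] C) (εm : C →ₗ[k] k)
    (b binv : C →ₗ[k] C →ₗ[k] k) (Td Tu : C →ₗ[k] C) : Prop :=
  IsInverseForm Δ εm Δ εm b binv ∧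
  IsCoalgAuto Δ εm Td ∧ IsCoalgAuto Δ εm Tu ∧
  Td ∘ₗ Tu = Tu ∘ₗ Td ∧
  QC1 Δ εm b binv Td Tu ∧ QC2 b Td Tu ∧ QC3 Δ b

/-- Quantum coalgebra `(C, b, S)`: `S : C → C^cop` is a coalgebra isomorphism with
respect to `b`, `b` is invertible with inverse `b(S(·),·)` (axiom (QC.1)), and
(QC.2), (QC.3) hold. -/
def IsQuantumCoalgebra (Δ : C →ₗ[k] C ⊗[k] C) (εm : C →ₗ[k] k)
    (b : C →ₗ[k] C →ₗ[k] k) (S : C →ₗ[k] C) : Prop :=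
  Function.Bijective S ∧ (∀ c, εm (S c) = εm c) ∧
  (∀ (c d e : C) (n m : ℕ) (c1 c2 : Fin n → C) (f1 f2 : Fin m → C),
    Δ c = ∑ i, c1 i ⊗ₜ[k] c2 i →
    Δ (S c) = ∑ j, f1 j ⊗ₜ[k] f2 j →
    (∑ i, b (S (c1 i)) d * b (S (c2 i)) e = ∑ j, b (f2 j) d * b (f1 j) e) ∧
    (∑ i, b d (S (c1 i)) * b e (S (c2 i)) = ∑ j, b d (f2 j) * b e (f1 j))) ∧
  IsInverseForm Δ εm Δ εm b (b ∘ₗ S) ∧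
  (∀ c d, b (S c) (S d) = b c d) ∧
  QC3 Δ b

/-- Strict quantum coalgebra `(C, b, S)`: `S : C → C^cop` is an ordinary coalgebra
isomorphism and (QC.1)–(QC.3) hold. -/
def IsStrictQuantumCoalgebra (Δ : C →ₗ[k] C ⊗[k] C) (εm : C →ₗ[k] k)
    (b : C →ₗ[k] C →ₗ[k] k) (S : C →ₗ[k] C) : Prop :=
  Function.Bijective S ∧ (∀ c, εm (S c) = εm c) ∧
  (∀ c, (TensorProduct.comm k C C) (Δ (S c)) = TensorProduct.map S S (Δ c)) ∧
  IsInverseForm Δ εm Δ εm b (b ∘ₗ S) ∧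
  (∀ c d, b (S c) (S d) = b c d) ∧
  QC3 Δ b

end CoalgebraDefs

section AlgebraDefs

variable {A : Type*} [Ring A] [Algebra k A]

def rho12 (ρ : A ⊗[k] A) : (A ⊗[k] A) ⊗[k] A := ρ ⊗ₜ[k] (1 : A)

def rho13 (ρ : A ⊗[k] A) : (A ⊗[k] A) ⊗[k] A :=
  TensorProduct.map ((TensorProduct.mk k A A).flip 1) LinearMap.id ρ

def rho23 (ρ : A ⊗[k] A) : (A ⊗[k] A) ⊗[k] A :=
  TensorProduct.map (TensorProduct.mk k A A 1) LinearMap.id ρ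

/-- The quantum Yang–Baxter equation for `ρ ∈ A ⊗ A`. -/
def QYBE (ρ : A ⊗[k] A) : Prop :=
  rho12 ρ * rho13 ρ * rho23 ρ = rho23 ρ * rho13 ρ * rho12 ρ

/-- Quantum algebra `(A, ρ, s)`. -/
def IsQuantumAlgebra (ρ : A ⊗[k] A) (s : A →ₗ[k] A) : Prop :=
  Function.Bijective s ∧ s 1 = 1 ∧ (∀ a b : A, s (a * b) = s b * s a) ∧
  ρ * TensorProduct.map s LinearMap.id ρ = 1 ∧
  TensorProduct.map s LinearMap.id ρ * ρ = 1 ∧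
  TensorProduct.map s s ρ = ρ ∧
  QYBE ρ

def opL (k A : Type*) [Field k] [Ring A] [Algebra k A] : A →ₗ[k] Aᵐᵒᵖ :=
  (MulOpposite.opLinearEquiv k).toLinearMap

/-- Oriented quantum algebra `(A, ρ, t_d, t_u)`. -/
def IsOrientedQuantumAlgebra (ρ : A ⊗[k] A) (td tu : A →ₗ[k] A) : Prop :=
  Function.Bijective td ∧ td 1 = 1 ∧ (∀ a b : A, td (a * b) = td a * td b) ∧
  Function.Bijective tu ∧ tu 1 = 1 ∧ (∀ a b : A, tu (a * b) = tu a * tu b) ∧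
  td ∘ₗ tu = tu ∘ₗ td ∧
  ∃ ρinv : A ⊗[k] A, ρ * ρinv = 1 ∧ ρinv * ρ = 1 ∧
    TensorProduct.map td (opL k A) ρinv * TensorProduct.map LinearMap.id (opL k A ∘ₗ tu) ρ = 1 ∧
    TensorProduct.map LinearMap.id (opL k A ∘ₗ tu) ρ * TensorProduct.map td (opL k A) ρinv = 1 ∧
    TensorProduct.map td td ρ = ρ ∧ TensorProduct.map tu tu ρ = ρ ∧
    QYBE ρ

/-- The comultiplication of the dual coalgebra of a finite-dimensional algebra. -/
def dualComul (k A : Type*) [Field k] [Ring A] [Algebra k A] [FiniteDimensional k A] :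
    Module.Dual k A →ₗ[k] Module.Dual k A ⊗[k] Module.Dual k A :=
  (TensorProduct.dualDistribEquiv k A A).symm.toLinearMap ∘ₗ (LinearMap.mul' k A).dualMap

/-- The counit of the dual coalgebra: evaluation at `1`. -/
def dualCounit (k A : Type*) [Field k] [Ring A] [Algebra k A] : Module.Dual k A →ₗ[k] k :=
  Module.Dual.eval k A 1

/-- The bilinear form `b_ρ` on the dual: `b_ρ(f, g) = (f ⊗ g)(ρ)`. -/
def dualForm {A : Type*} [Ring A] [Algebra k A] (ρ : A ⊗[k] A) :
    Module.Dual k A →ₗ[k] Module.Dual k A →ₗ[k] k :=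
  TensorProduct.curry ((Module.Dual.eval k (A ⊗[k] A) ρ) ∘ₗ TensorProduct.dualDistrib k A A)

/-- The embedding `A → A ⊕ A^op` onto the first summand. -/
def inlA (k A : Type*) [Field k] [Ring A] [Algebra k A] : A →ₗ[k] A × Aᵐᵒᵖ :=
  LinearMap.inl k A Aᵐᵒᵖ

/-- The embedding `a ↦ ā` of `A` onto the second summand `A^op` of `A ⊕ A^op`. -/
def inrA (k A : Type*) [Field k] [Ring A] [Algebra k A] : A →ₗ[k] A × Aᵐᵒᵖ :=
  LinearMap.inr k A Aᵐᵒᵖ ∘ₗ opL k A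

/-- The element `𝝆` of the doubling construction. -/
def doubleRho (ρ ρinv : A ⊗[k] A) (td' tu' : A →ₗ[k] A) :
    (A × Aᵐᵒᵖ) ⊗[k] (A × Aᵐᵒᵖ) :=
  TensorProduct.map (inlA k A) (inlA k A) ρ + TensorProduct.map (inrA k A) (inrA k A) ρ
    + TensorProduct.map (inrA k A) (inlA k A) ρinv
    + TensorProduct.map (inlA k A) (inrA k A ∘ₗ td' ∘ₗ tu') ρinv

/-- The map `𝐬(a ⊕ b) = b ⊕ t_d⁻¹∘t_u⁻¹(a)` of the doubling construction,
where `td'`, `tu'` are the inverses of `t_d`, `t_u`. -/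
def doubleS {A : Type*} [Ring A] [Algebra k A] (td' tu' : A →ₗ[k] A) :
    A × Aᵐᵒᵖ →ₗ[k] A × Aᵐᵒᵖ :=
  LinearMap.prod ((MulOpposite.opLinearEquiv k).symm.toLinearMap ∘ₗ LinearMap.snd k A Aᵐᵒᵖ)
    ((MulOpposite.opLinearEquiv k).toLinearMap ∘ₗ td' ∘ₗ tu' ∘ₗ LinearMap.fst k A Aᵐᵒᵖ)

/-- The diagonal extension `t ⊕ t` of an automorphism `t` of `A` to `A ⊕ A^op`. -/
def doubleT {A : Type*} [Ring A] [Algebra k A] (t : A →ₗ[k] A) :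
    A × Aᵐᵒᵖ →ₗ[k] A × Aᵐᵒᵖ :=
  LinearMap.prodMap t ((MulOpposite.opLinearEquiv k).toLinearMap ∘ₗ t ∘ₗ
    (MulOpposite.opLinearEquiv k).symm.toLinearMap)

end AlgebraDefs

end

section OQCAux


variable {k : Type*} [Field k]

/-- Every element of a tensor product is a `Fin`-indexed sum of simple tensors. -/
theorem exists_fin_rep {M N : Type*} [AddCommGroup M] [Module k M]
    [AddCommGroup N] [Module k N] (x : M ⊗[k] N) :
    ∃ (n : ℕ) (a : Fin n → M) (b : Fin n → N), x = ∑ i, a i ⊗ₜ[k] b i := by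
  obtain ⟨S, hS⟩ := TensorProduct.exists_finset x
  classical
  obtain ⟨e⟩ := Fintype.truncEquivFin S
  refine ⟨Fintype.card S, fun i => ((e.symm i : S) : M × N).1,
    fun i => ((e.symm i : S) : M × N).2, ?_⟩
  rw [hS, ← Finset.sum_attach S (fun p => p.1 ⊗ₜ[k] p.2)]
  exact (e.symm.sum_comp (fun x : S => (x : M × N).1 ⊗ₜ[k] (x : M × N).2)).symm

variable {C : Type*} [AddCommGroup C] [Module k C] [Coalgebra k C]

theorem counit_left_rep {c : C} {n : ℕ} {c1 c2 : Fin n → C}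
    (hc : Coalgebra.comul (R := k) c = ∑ i, c1 i ⊗ₜ[k] c2 i) :
    ∑ i, Coalgebra.counit (R := k) (c1 i) • c2 i = c := by
  have := congrArg (fun z => (TensorProduct.lid k C)
    ((Coalgebra.counit (R := k)).rTensor C z)) hc
  simpa [map_sum] using this.symm

theorem counit_right_rep {c : C} {n : ℕ} {c1 c2 : Fin n → C}
    (hc : Coalgebra.comul (R := k) c = ∑ i, c1 i ⊗ₜ[k] c2 i) :
    ∑ i, Coalgebra.counit (R := k) (c2 i) • c1 i = c := by
  have := congrArg (fun z => (TensorProduct.rid k C)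
    ((Coalgebra.counit (R := k)).lTensor C z)) hc
  simpa [map_sum] using this.symm

theorem coassoc_rep {c : C} {n : ℕ} {c1 c2 : Fin n → C}
    (hc : Coalgebra.comul (R := k) c = ∑ i, c1 i ⊗ₜ[k] c2 i)
    {p : Fin n → ℕ} {c11 c12 : (i : Fin n) → Fin (p i) → C}
    (hc1 : ∀ i, Coalgebra.comul (R := k) (c1 i) = ∑ a, c11 i a ⊗ₜ[k] c12 i a)
    {r : Fin n → ℕ} {c21 c22 : (i : Fin n) → Fin (r i) → C}
    (hc2 : ∀ i, Coalgebra.comul (R := k) (c2 i) = ∑ a, c21 i a ⊗ₜ[k] c22 i a) :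
    ∑ i, ∑ a, c11 i a ⊗ₜ[k] (c12 i a ⊗ₜ[k] c2 i)
      = ∑ i, ∑ a, c1 i ⊗ₜ[k] (c21 i a ⊗ₜ[k] c22 i a) := by
  have h := Coalgebra.coassoc_apply (R := k) c
  rw [hc] at h
  simp only [map_sum, LinearMap.rTensor_tmul, LinearMap.lTensor_tmul] at h
  calc ∑ i, ∑ a, c11 i a ⊗ₜ[k] (c12 i a ⊗ₜ[k] c2 i)
      = ∑ i, (TensorProduct.assoc k C C C) ((Coalgebra.comul (R := k) (c1 i)) ⊗ₜ[k] c2 i) := by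
        refine Finset.sum_congr rfl fun i _ => ?_
        rw [hc1 i, TensorProduct.sum_tmul, map_sum]
        simp
    _ = ∑ i, c1 i ⊗ₜ[k] (Coalgebra.comul (R := k) (c2 i)) := h
    _ = ∑ i, ∑ a, c1 i ⊗ₜ[k] (c21 i a ⊗ₜ[k] c22 i a) := by
        refine Finset.sum_congr rfl fun i _ => ?_
        rw [hc2 i, TensorProduct.tmul_sum]


theorem sum_swap_dep2 {M : Type*} [AddCommMonoid M] {n m : ℕ} {p : Fin n → ℕ} {q : Fin m → ℕ}
    (f : (i : Fin n) → Fin (p i) → (j : Fin m) → Fin (q j) → M) :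
    ∑ i, ∑ a, ∑ j, ∑ e, f i a j e = ∑ j, ∑ e, ∑ i, ∑ a, f i a j e := by
  calc ∑ i, ∑ a, ∑ j, ∑ e, f i a j e
      = ∑ i, ∑ j, ∑ e, ∑ a, f i a j e := by
        refine Finset.sum_congr rfl fun i _ => ?_
        rw [Finset.sum_comm]
        exact Finset.sum_congr rfl fun j _ => Finset.sum_comm
    _ = ∑ j, ∑ i, ∑ e, ∑ a, f i a j e := Finset.sum_comm
    _ = ∑ j, ∑ e, ∑ i, ∑ a, f i a j e := by
        exact Finset.sum_congr rfl fun j _ => Finset.sum_comm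

/-- If `γ` is a right convolution inverse of `β` and a left convolution inverse of `δ`,
then `β = δ`. -/
theorem conv_cancel (β γ δ : C →ₗ[k] C →ₗ[k] k)
    (h1 : ∀ (c d : C) (n m : ℕ) (c1 c2 : Fin n → C) (d1 d2 : Fin m → C),
      Coalgebra.comul (R := k) c = ∑ i, c1 i ⊗ₜ[k] c2 i →
      Coalgebra.comul (R := k) d = ∑ j, d1 j ⊗ₜ[k] d2 j →
      ∑ i, ∑ j, β (c1 i) (d1 j) * γ (c2 i) (d2 j)
        = Coalgebra.counit (R := k) c * Coalgebra.counit (R := k) d)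
    (h2 : ∀ (c d : C) (n m : ℕ) (c1 c2 : Fin n → C) (d1 d2 : Fin m → C),
      Coalgebra.comul (R := k) c = ∑ i, c1 i ⊗ₜ[k] c2 i →
      Coalgebra.comul (R := k) d = ∑ j, d1 j ⊗ₜ[k] d2 j →
      ∑ i, ∑ j, γ (c1 i) (d1 j) * δ (c2 i) (d2 j)
        = Coalgebra.counit (R := k) c * Coalgebra.counit (R := k) d)
    (c d : C) : β c d = δ c d := by
  symm
  obtain ⟨n, c1, c2, hc⟩ := exists_fin_rep (Coalgebra.comul (R := k) c)
  obtain ⟨m, d1, d2, hd⟩ := exists_fin_rep (Coalgebra.comul (R := k) d)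
  choose p c11 c12 hc1 using fun i => exists_fin_rep (Coalgebra.comul (R := k) (c1 i))
  choose r c21 c22 hc2 using fun i => exists_fin_rep (Coalgebra.comul (R := k) (c2 i))
  choose q d11 d12 hd1 using fun j => exists_fin_rep (Coalgebra.comul (R := k) (d1 j))
  choose s d21 d22 hd2 using fun j => exists_fin_rep (Coalgebra.comul (R := k) (d2 j))
  -- c-side coassociativity in functional form
  have keyc : ∀ u v w : C,
      ∑ i, ∑ a, β (c11 i a) u * (γ (c12 i a) v * δ (c2 i) w)
        = ∑ i, ∑ a, β (c1 i) u * (γ (c21 i a) v * δ (c22 i a) w) := by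
    intro u v w
    have h := coassoc_rep hc hc1 hc2
    have := congrArg (fun z => ((LinearMap.mul' k k) ∘ₗ
      TensorProduct.map (β.flip u) ((LinearMap.mul' k k) ∘ₗ
        TensorProduct.map (γ.flip v) (δ.flip w))) z) h
    simpa [map_sum, LinearMap.mul'_apply] using this
  have keyd : ∀ u v w : C,
      ∑ j, ∑ a, β u (d11 j a) * (γ v (d12 j a) * δ w (d2 j))
        = ∑ j, ∑ a, β u (d1 j) * (γ v (d21 j a) * δ w (d22 j a)) := by
    intro u v w
    have h := coassoc_rep hd hd1 hd2
    have := congrArg (fun z => ((LinearMap.mul' k k) ∘ₗ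
      TensorProduct.map (β u) ((LinearMap.mul' k k) ∘ₗ
        TensorProduct.map (γ v) (δ w))) z) h
    simpa [map_sum, LinearMap.mul'_apply] using this
  have ec := counit_left_rep hc
  have ed := counit_left_rep hd
  have ec' := counit_right_rep hc
  have ed' := counit_right_rep hd
  calc δ c d
      = ∑ i, ∑ j, (Coalgebra.counit (R := k) (c1 i) * Coalgebra.counit (R := k) (d1 j))
          * δ (c2 i) (d2 j) := by
        conv_lhs => rw [← ec, ← ed]
        simp only [map_sum, map_smul, LinearMap.sum_apply, LinearMap.smul_apply,
          smul_eq_mul, Finset.mul_sum]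
        rw [Finset.sum_comm]
        exact Finset.sum_congr rfl fun i _ => Finset.sum_congr rfl fun j _ => by ring
    _ = ∑ i, ∑ j, (∑ a, ∑ e, β (c11 i a) (d11 j e) * γ (c12 i a) (d12 j e))
          * δ (c2 i) (d2 j) := by
        refine Finset.sum_congr rfl fun i _ => Finset.sum_congr rfl fun j _ => ?_
        rw [h1 (c1 i) (d1 j) (p i) (q j) (c11 i) (c12 i) (d11 j) (d12 j) (hc1 i) (hd1 j)]
    _ = ∑ j, ∑ e, ∑ i, ∑ a, β (c11 i a) (d11 j e) * (γ (c12 i a) (d12 j e) * δ (c2 i) (d2 j)) := by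
        simp_rw [Finset.sum_mul, mul_assoc]
        rw [show (∑ i, ∑ j, ∑ a, ∑ e, β (c11 i a) (d11 j e)
              * (γ (c12 i a) (d12 j e) * δ (c2 i) (d2 j)))
            = ∑ i, ∑ a, ∑ j, ∑ e, β (c11 i a) (d11 j e)
              * (γ (c12 i a) (d12 j e) * δ (c2 i) (d2 j)) from
          Finset.sum_congr rfl fun i _ => Finset.sum_comm]
        exact sum_swap_dep2 _
    _ = ∑ j, ∑ e, ∑ i, ∑ a, β (c1 i) (d11 j e) * (γ (c21 i a) (d12 j e) * δ (c22 i a) (d2 j)) := by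
        refine Finset.sum_congr rfl fun j _ => Finset.sum_congr rfl fun e _ => ?_
        exact keyc (d11 j e) (d12 j e) (d2 j)
    _ = ∑ i, ∑ a, ∑ j, ∑ e, β (c1 i) (d11 j e) * (γ (c21 i a) (d12 j e) * δ (c22 i a) (d2 j)) := by
        exact (sum_swap_dep2 _).symm
    _ = ∑ i, ∑ a, ∑ j, ∑ e, β (c1 i) (d1 j) * (γ (c21 i a) (d21 j e) * δ (c22 i a) (d22 j e)) := by
        refine Finset.sum_congr rfl fun i _ => Finset.sum_congr rfl fun a _ => ?_
        exact keyd (c1 i) (c21 i a) (c22 i a)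
    _ = ∑ i, ∑ j, β (c1 i) (d1 j) * (∑ a, ∑ e, γ (c21 i a) (d21 j e) * δ (c22 i a) (d22 j e)) := by
        refine Finset.sum_congr rfl fun i _ => ?_
        rw [Finset.sum_comm]
        refine Finset.sum_congr rfl fun j _ => ?_
        rw [Finset.mul_sum]
        refine Finset.sum_congr rfl fun a _ => ?_
        rw [Finset.mul_sum]
    _ = ∑ i, ∑ j, β (c1 i) (d1 j)
          * (Coalgebra.counit (R := k) (c2 i) * Coalgebra.counit (R := k) (d2 j)) := by
        refine Finset.sum_congr rfl fun i _ => Finset.sum_congr rfl fun j _ => ?_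
        rw [h2 (c2 i) (d2 j) (r i) (s j) (c21 i) (c22 i) (d21 j) (d22 j) (hc2 i) (hd2 j)]
    _ = β c d := by
        conv_rhs => rw [← ec', ← ed']
        simp only [map_sum, map_smul, LinearMap.sum_apply, LinearMap.smul_apply,
          smul_eq_mul, Finset.mul_sum]
        rw [Finset.sum_comm]
        exact Finset.sum_congr rfl fun i _ => Finset.sum_congr rfl fun j _ => by ring


end OQCAux

/-- For a standard oriented quantum coalgebra `(C, b, 1_C, T)` with `C` cocommutative,
`b(c, T(d)) = b(c, d) = b(T(c), d)` for all `c, d`. -/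
theorem standard_oqc_cocommutative {k C : Type*} [Field k] [AddCommGroup C] [Module k C]
    [Coalgebra k C] (b binv : C →ₗ[k] C →ₗ[k] k) (T : C →ₗ[k] C)
    (h : IsOrientedQuantumCoalgebra (Coalgebra.comul (R := k)) (Coalgebra.counit (R := k))
      b binv LinearMap.id T)
    (hcoc : ∀ c : C, (TensorProduct.comm k C C) (Coalgebra.comul (R := k) c)
      = Coalgebra.comul (R := k) c) :
    ∀ c d : C, b c (T d) = b c d ∧ b (T c) d = b c d := by
  obtain ⟨hinv, -, -, -, hqc1, hqc2, -⟩ := h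
  have main : ∀ c d : C, b c (T d) = b c d := by
    intro c d
    have := conv_cancel (b.compl₂ T) binv b
      (fun c d n m c1 c2 d1 d2 hc hd => by
        have hd' : Coalgebra.comul (R := k) d = ∑ j, d2 j ⊗ₜ[k] d1 j := by
          conv_lhs => rw [← hcoc d]
          rw [hd, map_sum]
          simp
        have := (hqc1 c d n m c1 c2 d2 d1 hc hd').1
        simpa using this)
      (fun c d n m c1 c2 d1 d2 hc hd => (hinv c d n m c1 c2 d1 d2 hc hd).1) c d
    simpa using this
  intro c d
  refine ⟨main c d, ?_⟩
  calc b (T c) d = b (T c) (T d) := (main (T c) d).symm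
    _ = b c d := (hqc2 c d).2
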